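/- The Weierstrass method satisfies the polynomial identity of Newton's method in d dimensions: if z ∈ ℂ^d has pairwise distinct entries and z' = W_p(z), then Σ_{k=1}^d (z'_k − z_k) · ∏_{j≠k}(Z − z_j) = ∏_{k=1}^d (Z − z_k) − p(Z) as polynomials in Z. -/

import Mathlib

open Polynomial Finset

/-- The Weierstrass iteration satisfies the polynomial identity of Newton's method
in `d` dimensions: if `z` has pairwise distinct entries and `z' = W_p(z)`, then
`∑_k (z'_k − z_k) ∏_{j≠k} (Z − z_j) = ∏_k (Z − z_k) − p(Z)` as polynomials in `Z`. -/
theorem weierstrass_polynomial_identity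
    (d : ℕ) (p : Polynomial ℂ) (hmonic : p.Monic) (hdeg : p.natDegree = d)
    (z z' : Fin d → ℂ) (hz : Function.Injective z)
    (hW : ∀ k : Fin d,
      z' k = z k - p.eval (z k) / ∏ j ∈ univ.erase k, (z k - z j)) :
    ∑ k : Fin d, C (z' k - z k) * ∏ j ∈ univ.erase k, (X - C (z j))
      = (∏ k : Fin d, (X - C (z k))) - p := by
  rcases Nat.eq_zero_or_pos d with hd | hd
  · subst hd
    have : p = 1 := hmonic.natDegree_eq_zero.mp hdeg
    simp [this]
  have hprodne : ∀ k : Fin d, (∏ j ∈ univ.erase k, (z k - z j)) ≠ 0 := by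
    intro k
    refine prod_ne_zero_iff.mpr fun j hj => ?_
    rw [mem_erase] at hj
    exact sub_ne_zero.mpr fun h => hj.1 (hz h).symm
  refine Polynomial.eq_of_degrees_lt_of_eval_index_eq (v := z) univ
    (Set.injOn_of_injective hz) ?_ ?_ ?_
  · refine lt_of_le_of_lt (degree_sum_le _ _) ?_
    rw [Finset.sup_lt_iff (by simp only [card_univ, Fintype.card_fin]; exact_mod_cast WithBot.bot_lt_coe d)]
    intro k _
    calc (C (z' k - z k) * ∏ j ∈ univ.erase k, (X - C (z j))).degree
        ≤ (C (z' k - z k)).degree + (∏ j ∈ univ.erase k, (X - C (z j))).degree :=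
          degree_mul_le _ _
      _ ≤ 0 + (d - 1 : ℕ) := by
          refine add_le_add degree_C_le ?_
          refine le_trans (degree_prod_le _ _) ?_
          simp [degree_X_sub_C, card_univ]
      _ < (#(univ : Finset (Fin d)) : WithBot ℕ) := by
          simp only [zero_add, card_univ, Fintype.card_fin]
          exact_mod_cast Nat.cast_lt.mpr (Nat.pred_lt hd.ne')
  · have h1 : (∏ k : Fin d, (X - C (z k))).Monic := monic_prod_of_monic _ _
      (fun k _ => monic_X_sub_C _)
    have h2 : (∏ k : Fin d, (X - C (z k))).natDegree = d := by
      simp [natDegree_prod_of_monic _ _ (fun k _ => monic_X_sub_C (z k)), card_univ]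
    have := degree_sub_lt
      (by rw [degree_eq_natDegree hmonic.ne_zero, degree_eq_natDegree h1.ne_zero, h2, hdeg])
      (h1.ne_zero) (by rw [hmonic.leadingCoeff, h1.leadingCoeff])
    rw [degree_eq_natDegree h1.ne_zero, h2] at this
    simpa [card_univ] using this
  · intro i _
    rw [eval_sub, eval_prod]
    have hzero : (∏ k : Fin d, (z i - z k)) = 0 :=
      prod_eq_zero (mem_univ i) (by simp)
    simp only [eval_sub, eval_X, eval_C] at hzero ⊢
    rw [hzero, zero_sub, eval_finset_sum]
    rw [Finset.sum_eq_single i]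
    · rw [eval_mul, eval_C, eval_prod, hW i]
      simp only [eval_sub, eval_X, eval_C]
      field_simp
      rw [sub_sub_cancel_left, mul_neg, mul_div_assoc', mul_comm, mul_div_assoc, div_self (hprodne i), mul_one]
    · intro k _ hk
      have h0 : (∏ j ∈ univ.erase k, (eval (z i) (X - C (z j)))) = 0 :=
        prod_eq_zero (mem_erase.mpr ⟨Ne.symm hk, mem_univ i⟩) (by simp)
      rw [eval_mul, eval_prod, h0, mul_zero]
    · simp
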